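/- Let H'_k be the random k-uniform multi-hypergraph with vertex set [⌈k·log k⌉] whose k edges e_1,…,e_k are chosen independently and uniformly at random from all k-element subsets of the vertex set. Then the probability that for every vertex subset X of size ⌊log²k − 10·log k·log log k⌋ at least (log⁹k)/2 of the edges of H'_k are disjoint from X tends to 1 as k → ∞ (log denotes the natural logarithm). -/

import Mathlib

set_option maxHeartbeats 2000000

attribute [local instance 10] Classical.propDecidable

open Finset Real

lemma nat_id (b k : ℕ) : (b+1) * b.choose k = (b+1).choose k * (b+1-k) :=
  (Nat.add_one_mul_choose_eq b k).trans (Nat.choose_succ_right_eq (b+1) k)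

lemma choose_ratio (a k : ℕ) (hk : k ≤ a) (ha : 0 < a) :
    ∀ m : ℕ, (((a+m).choose k : ℝ)) * (1 - k/a)^m ≤ (a.choose k : ℝ) := by
  have haR : (0:ℝ) < a := by exact_mod_cast ha
  have hx : (0:ℝ) ≤ 1 - k/a := by
    rw [sub_nonneg, div_le_one haR]; exact_mod_cast hk
  intro m
  induction m with
  | zero => simp
  | succ m ih =>
    have hbR : (0:ℝ) < (a:ℝ)+m+1 := by positivity
    have h1 : ((a:ℝ)+m+1) * ((a+m).choose k) = ((a+m+1).choose k) * (((a:ℝ)+m+1) - k) := by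
      have h2 := nat_id (a+m) k
      rcases le_or_gt k (a+m+1) with h | h
      · have h4 := congrArg (Nat.cast : ℕ → ℝ) h2
        push_cast [Nat.cast_sub h] at h4
        linarith [h4]
      · rw [Nat.choose_eq_zero_of_lt h, Nat.choose_eq_zero_of_lt (by omega)]
        simp
    have key : ((a+m+1).choose k : ℝ) * (1 - k/a) ≤ ((a+m).choose k : ℝ) := by
      have step1 : ((a+m+1).choose k : ℝ) * (1 - k/a) ≤ ((a+m+1).choose k : ℝ) * (1 - k/((a:ℝ)+m+1)) := by
        apply mul_le_mul_of_nonneg_left _ (by positivity)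
        have : (k:ℝ)/((a:ℝ)+m+1) ≤ k/a := by
          apply div_le_div_of_nonneg_left (by positivity) haR (by linarith)
        linarith
      have step2 : ((a+m+1).choose k : ℝ) * (1 - k/((a:ℝ)+m+1)) = ((a+m).choose k : ℝ) := by
        field_simp
        linarith [h1]
      linarith
    calc ((a+(m+1)).choose k : ℝ) * (1 - k/a)^(m+1)
        = (((a+m+1).choose k : ℝ) * (1 - k/a)) * (1-k/a)^m := by
          rw [show a+(m+1) = a+m+1 by ring, pow_succ]; ring
      _ ≤ ((a+m).choose k : ℝ) * (1-k/a)^m :=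
          mul_le_mul_of_nonneg_right key (pow_nonneg hx m)
      _ ≤ _ := ih

lemma card_disjoint (n k : ℕ) (X : Finset (Fin n)) :
    (Finset.univ.filter (fun e : {e : Finset (Fin n) // e.card = k} =>
      (e : Finset (Fin n)) ∩ X = ∅)).card = (n - X.card).choose k := by
  classical
  rw [show n - X.card = Xᶜ.card from by rw [Finset.card_compl, Fintype.card_fin],
    ← Finset.card_powersetCard]
  refine Finset.card_bij (fun e _ => (e : Finset (Fin n))) ?_ ?_ ?_
  · intro e he
    simp only [mem_filter, mem_univ, true_and] at he
    rw [Finset.mem_powersetCard]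
    exact ⟨fun x hx => Finset.mem_compl.2 (fun hX => by
      have : x ∈ (e : Finset (Fin n)) ∩ X := Finset.mem_inter.2 ⟨hx, hX⟩
      rw [he] at this; exact absurd this (Finset.notMem_empty x)), e.2⟩
  · intro e₁ h₁ e₂ h₂ h
    exact Subtype.ext h
  · intro s hs
    rw [Finset.mem_powersetCard] at hs
    refine ⟨⟨s, hs.2⟩, ?_, rfl⟩
    simp only [mem_filter, mem_univ, true_and]
    rw [← Finset.disjoint_iff_inter_eq_empty]
    exact Finset.disjoint_left.2 fun x hx hX => Finset.mem_compl.1 (hs.1 hx) hX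

lemma sum_prod_pi {E : Type*} [Fintype E] (k : ℕ) (g : E → ℝ) :
    ∑ ω : Fin k → E, ∏ i, g (ω i) = (∑ e, g e) ^ k := by
  classical
  rw [← Fintype.piFinset_univ, ← Finset.prod_univ_sum (fun _ => Finset.univ) (fun _ e => g e)]
  simp [Finset.prod_const]

lemma chernoff_count {E : Type*} [Fintype E] (k : ℕ) (p : E → Prop) [DecidablePred p]
    {θ t : ℝ} (hθ0 : 0 < θ) (hθ1 : θ ≤ 1) :
    ((Finset.univ.filter (fun ω : Fin k → E =>
      (((Finset.univ.filter fun i => p (ω i)).card : ℝ) < t))).card : ℝ) * θ ^ t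
      ≤ ((Fintype.card E : ℝ) - (1-θ) * (Finset.univ.filter p).card) ^ k := by
  set S : (Fin k → E) → ℕ := fun ω => (Finset.univ.filter fun i => p (ω i)).card with hS
  have hprod : ∀ ω : Fin k → E,
      θ ^ ((S ω : ℝ)) = ∏ i, (if p (ω i) then θ else 1) := by
    intro ω
    rw [Real.rpow_natCast, hS, Finset.prod_ite, Finset.prod_const, Finset.prod_const_one, mul_one]
  calc ((Finset.univ.filter (fun ω : Fin k → E => ((S ω : ℝ) < t))).card : ℝ) * θ ^ t
      = ∑ _ω ∈ Finset.univ.filter (fun ω : Fin k → E => ((S ω : ℝ) < t)), θ ^ t := by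
        rw [Finset.sum_const, nsmul_eq_mul]
    _ ≤ ∑ ω ∈ Finset.univ.filter (fun ω : Fin k → E => ((S ω : ℝ) < t)), θ ^ ((S ω : ℝ)) :=
        Finset.sum_le_sum fun ω hω =>
          Real.rpow_le_rpow_of_exponent_ge hθ0 hθ1 ((Finset.mem_filter.1 hω).2).le
    _ ≤ ∑ ω : Fin k → E, θ ^ ((S ω : ℝ)) :=
        Finset.sum_le_sum_of_subset_of_nonneg (Finset.filter_subset _ _)
          (fun ω _ _ => (Real.rpow_pos_of_pos hθ0 _).le)
    _ = ∑ ω : Fin k → E, ∏ i, (if p (ω i) then θ else 1) :=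
        Finset.sum_congr rfl fun ω _ => hprod ω
    _ = (∑ e, (if p e then θ else 1)) ^ k := sum_prod_pi k (fun e => if p e then θ else 1)
    _ = ((Fintype.card E : ℝ) - (1-θ) * (Finset.univ.filter p).card) ^ k := by
        congr 1
        rw [Finset.sum_ite, Finset.sum_const, Finset.sum_const, nsmul_eq_mul, nsmul_eq_mul, mul_one]
        have hc : ((Finset.univ.filter p).card : ℝ) +
            ((Finset.univ.filter (fun e => ¬ p e)).card : ℝ) = Fintype.card E := by
          rw [← Nat.cast_add, Finset.card_filter_add_card_filter_not]
          rfl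
        linarith [hc]

lemma log_le_two_sqrt {y : ℝ} (hy : 1 ≤ y) : Real.log y ≤ 2 * Real.sqrt y := by
  have h : Real.log (Real.sqrt y) ≤ Real.sqrt y - 1 :=
    Real.log_le_sub_one_of_pos (Real.sqrt_pos.2 (by linarith))
  rw [Real.log_sqrt (by linarith)] at h
  linarith

lemma exp_le_one_sub {x : ℝ} (hx1 : x < 1) :
    Real.exp (-(x/(1-x))) ≤ 1 - x := by
  have h1x : (0:ℝ) < 1 - x := by linarith
  have h := Real.add_one_le_exp (x/(1-x))
  have h1 : 1/(1-x) ≤ Real.exp (x/(1-x)) := by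
    have h2 : 1 + x/(1-x) = 1/(1-x) := by field_simp; ring
    linarith
  rw [Real.exp_neg]
  calc (Real.exp (x/(1-x)))⁻¹ ≤ (1/(1-x))⁻¹ := by
        apply inv_anti₀ (by positivity) h1
    _ = 1 - x := by field_simp
lemma main_bound (k : ℕ) (hk256 : 256 ≤ k) (hL8 : 10^8 ≤ Real.log k) :
    1 - Real.exp (-Real.log k) ≤
      (((Finset.univ :
          Finset (Fin k → {e : Finset (Fin ⌈(k : ℝ) * Real.log k⌉₊) // e.card = k})).filter
        (fun ω => ∀ X : Finset (Fin ⌈(k : ℝ) * Real.log k⌉₊),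
          X.card = ⌊(Real.log k) ^ 2 - 10 * Real.log k * Real.log (Real.log k)⌋₊ →
          (Real.log k) ^ 9 / 2 ≤
            ((Finset.univ.filter (fun i : Fin k => (ω i).1 ∩ X = ∅)).card : ℝ))).card : ℝ)
      / (Fintype.card (Fin k → {e : Finset (Fin ⌈(k : ℝ) * Real.log k⌉₊) // e.card = k})) := by
  set L := Real.log k with hLdef
  set LL := Real.log L with hLLdef
  set n := ⌈(k : ℝ) * L⌉₊ with hndef
  set m := ⌊L ^ 2 - 10 * L * LL⌋₊ with hmdef
  -- basic numeric facts
  have hkR : (256:ℝ) ≤ k := by exact_mod_cast hk256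
  have hk0 : (0:ℝ) < k := by linarith
  have hk1 : (1:ℝ) ≤ k := by linarith
  have hL1 : (1:ℝ) ≤ L := by linarith
  have hL0 : (0:ℝ) < L := by linarith
  have hL400 : (400:ℝ) ≤ L := by linarith
  have hLL0 : (0:ℝ) ≤ LL := Real.log_nonneg hL1
  have hsL : Real.sqrt L * Real.sqrt L = L := Real.mul_self_sqrt hL0.le
  have hs4 : (10^4:ℝ) ≤ Real.sqrt L := by
    rw [show (10:ℝ)^4 = 10000 by norm_num]
    rw [Real.le_sqrt (by norm_num) hL0.le]
    nlinarith
  have hs0 : (0:ℝ) ≤ Real.sqrt L := Real.sqrt_nonneg L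
  have hLLs : LL ≤ 2 * Real.sqrt L := log_le_two_sqrt hL1
  have h10LL : 10 * LL ≤ L := by nlinarith
  -- L^2 ≤ k
  have hsk : (16:ℝ) ≤ Real.sqrt k := by
    rw [Real.le_sqrt (by norm_num) hk0.le]; nlinarith
  have hskk : Real.sqrt k * Real.sqrt k = k := Real.mul_self_sqrt hk0.le
  have hssk : Real.sqrt (Real.sqrt k) * Real.sqrt (Real.sqrt k) = Real.sqrt k :=
    Real.mul_self_sqrt (Real.sqrt_nonneg k)
  have hssk1 : (1:ℝ) ≤ Real.sqrt (Real.sqrt k) := by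
    nlinarith [Real.sqrt_nonneg (Real.sqrt k)]
  have hlogk4 : L ≤ 4 * Real.sqrt (Real.sqrt k) := by
    have h1 : Real.log (Real.sqrt k) ≤ 2 * Real.sqrt (Real.sqrt k) := by
      apply log_le_two_sqrt; nlinarith [Real.sqrt_nonneg k]
    rw [Real.log_sqrt hk0.le] at h1
    rw [hLdef]; linarith
  have hL2k : L ^ 2 ≤ k := by
    nlinarith [Real.sqrt_nonneg k, Real.sqrt_nonneg (Real.sqrt k)]
  -- facts about n
  have hn_lb : (k:ℝ) * L ≤ n := Nat.le_ceil _
  have hn_ub : (n:ℝ) ≤ k * L + 1 := (Nat.ceil_lt_add_one (by positivity)).le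
  have hn1 : (1:ℝ) ≤ n := by nlinarith
  have hn0 : (0:ℝ) < n := by linarith
  have hkn : k ≤ n := by
    have : (k:ℝ) ≤ n := by nlinarith
    exact_mod_cast this
  -- facts about m
  have hr0 : (0:ℝ) ≤ L ^ 2 - 10 * L * LL := by nlinarith
  have hm_ub : (m:ℝ) ≤ L ^ 2 - 10 * L * LL := Nat.floor_le hr0
  have hm2 : (m:ℝ) ≤ L ^ 2 := by nlinarith
  have hm0 : (0:ℝ) ≤ m := Nat.cast_nonneg m
  have hmkR : (m:ℝ) + k ≤ (k:ℝ) * L := by nlinarith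
  have hmkn : m + k ≤ n := by
    have : ((m + k : ℕ) : ℝ) ≤ n := by push_cast; linarith
    exact_mod_cast this
  have hmn : m ≤ n := by omega
  have hknm : k ≤ n - m := by omega
  have hnm0 : 0 < n - m := by omega
  -- N and D
  set N := n.choose k with hNdef
  set D := (n - m).choose k with hDdef
  have hN0 : 0 < N := Nat.choose_pos hkn
  have hNR : (0:ℝ) < N := by exact_mod_cast hN0
  have hDleN : D ≤ N := Nat.choose_le_choose k (Nat.sub_le n m)
  have hD0 : (0:ℝ) ≤ D := Nat.cast_nonneg D
  have hDleNR : (D:ℝ) ≤ N := by exact_mod_cast hDleN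
  -- the ratio lower bound: exp(-(L - 10 LL - 6)) ≤ D / N
  have haR : ((n - m : ℕ) : ℝ) = (n:ℝ) - m := by
    push_cast [Nat.cast_sub hmn]; ring
  set aR : ℝ := ((n - m : ℕ) : ℝ) with haRdef
  set x : ℝ := (k:ℝ) / aR with hxdef
  have haRk : (k:ℝ) * (L - 2) ≤ aR - k := by
    rw [haR, show (k:ℝ)*(L-2) = k*L - 2*k by ring]
    linarith
  have hd0 : (0:ℝ) < (k:ℝ) * (L - 2) := by
    apply mul_pos hk0; linarith
  have haRk0 : (0:ℝ) < aR - k := lt_of_lt_of_le hd0 haRk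
  have haR0 : (0:ℝ) < aR := by linarith [hk0]
  have hx0 : (0:ℝ) ≤ x := by positivity
  have hx1 : x < 1 := by rw [hxdef, div_lt_one haR0]; linarith
  have hratio : (N:ℝ) * (1 - x) ^ m ≤ D := by
    have h := choose_ratio (n - m) k hknm hnm0 m
    rw [Nat.sub_add_cancel hmn] at h
    exact h
  have hquot : (m:ℝ) * (x / (1 - x)) ≤ L - 10 * LL + 6 := by
    have hxx : x / (1 - x) = (k:ℝ) / (aR - k) := by
      have hne1 : aR ≠ 0 := haR0.ne'
      have hne2 : aR - k ≠ 0 := haRk0.ne'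
      have h1mx : 1 - x = (aR - k)/aR := by rw [hxdef]; field_simp
      rw [hxdef, h1mx]
      field_simp
    have h5 : (m:ℝ) * k / (aR - k) ≤ (L^2 - 10*L*LL) * k / ((k:ℝ) * (L-2)) :=
      div_le_div₀ (by positivity) (mul_le_mul_of_nonneg_right hm_ub hk0.le) hd0 haRk
    have h6 : (L^2 - 10*L*LL) * k / ((k:ℝ) * (L-2)) = (L^2 - 10*L*LL)/(L-2) := by
      have hL2ne : L - 2 ≠ 0 := ne_of_gt (by linarith)
      have hkne : (k:ℝ) ≠ 0 := hk0.ne'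
      field_simp
    have h7 : (L^2 - 10*L*LL)/(L-2) ≤ L - 10*LL + 6 := by
      rw [div_le_iff₀ (by linarith : (0:ℝ) < L-2)]
      have hexp : (L - 10*LL + 6)*(L-2) - (L^2 - 10*L*LL) = 4*L + 20*LL - 12 := by ring
      linarith
    rw [hxx, ← mul_div_assoc]
    linarith
  have hqb : Real.exp (-(L - 10 * LL + 6)) ≤ (D:ℝ) / N := by
    have step1 : Real.exp (-(x / (1-x))) ^ m ≤ (1 - x) ^ m :=
      pow_le_pow_left₀ (Real.exp_nonneg _) (exp_le_one_sub hx1) m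
    have step2 : Real.exp (-(x / (1-x))) ^ m = Real.exp (-((m:ℝ) * (x / (1-x)))) := by
      rw [← Real.exp_nat_mul]; ring_nf
    have step3 : Real.exp (-(L - 10 * LL + 6)) ≤ Real.exp (-((m:ℝ) * (x / (1-x)))) :=
      Real.exp_le_exp.2 (by linarith)
    rw [le_div_iff₀ hNR]
    calc Real.exp (-(L - 10 * LL + 6)) * N ≤ Real.exp (-((m:ℝ) * (x / (1-x)))) * N :=
          mul_le_mul_of_nonneg_right step3 hNR.le
      _ = N * Real.exp (-(x / (1-x))) ^ m := by rw [step2]; ring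
      _ ≤ N * (1 - x) ^ m := by
          apply mul_le_mul_of_nonneg_left step1 hNR.le
      _ ≤ D := hratio
  -- Chernoff parameters
  set θ : ℝ := L⁻¹ with hθdef
  have hθ0 : 0 < θ := by rw [hθdef]; positivity
  have hθ1 : θ ≤ 1 := by rw [hθdef]; exact inv_le_one_of_one_le₀ hL1
  have hθhalf : θ ≤ 1/2 := by
    rw [hθdef, show (1:ℝ)/2 = (2:ℝ)⁻¹ by norm_num]
    exact inv_anti₀ (by norm_num) (by linarith)
  have hEcard : Fintype.card {e : Finset (Fin n) // e.card = k} = N := by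
    rw [Fintype.card_finset_len, Fintype.card_fin]
  have htpos : (0:ℝ) < θ ^ (L^9/2) := Real.rpow_pos_of_pos hθ0 _
  -- per-X Chernoff bound
  have perX : ∀ X : Finset (Fin n), X.card = m →
      ((Finset.univ.filter (fun ω : Fin k → {e : Finset (Fin n) // e.card = k} =>
        ((Finset.univ.filter (fun i : Fin k => (ω i).1 ∩ X = ∅)).card : ℝ) < L^9/2)).card : ℝ)
      ≤ ((N:ℝ) - (1-θ) * D) ^ k / θ ^ (L^9/2) := by
    intro X hX
    have h := chernoff_count (E := {e : Finset (Fin n) // e.card = k}) k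
      (fun e => (e : Finset (Fin n)) ∩ X = ∅) (t := L^9/2) hθ0 hθ1
    rw [hEcard, card_disjoint, hX] at h
    rw [le_div_iff₀ htpos]
    exact h
  -- union bound
  set P : (Fin k → {e : Finset (Fin n) // e.card = k}) → Prop := fun ω =>
    ∀ X : Finset (Fin n), X.card = m →
      L^9/2 ≤ ((Finset.univ.filter (fun i : Fin k => (ω i).1 ∩ X = ∅)).card : ℝ) with hPdef
  have hsub : Finset.univ.filter (fun ω => ¬ P ω) ⊆
      (Finset.univ.powersetCard m).biUnion (fun X => Finset.univ.filter
        (fun ω : Fin k → {e : Finset (Fin n) // e.card = k} =>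
          ((Finset.univ.filter (fun i : Fin k => (ω i).1 ∩ X = ∅)).card : ℝ) < L^9/2)) := by
    intro ω hω
    simp only [Finset.mem_filter, Finset.mem_univ, true_and, hPdef] at hω
    push_neg at hω
    obtain ⟨X, hX1, hX2⟩ := hω
    rw [Finset.mem_biUnion]
    exact ⟨X, Finset.mem_powersetCard_univ.2 hX1, Finset.mem_filter.2 ⟨Finset.mem_univ _, hX2⟩⟩
  have hbad : ((Finset.univ.filter (fun ω => ¬ P ω)).card : ℝ) ≤
      (n.choose m : ℝ) * (((N:ℝ) - (1-θ) * D) ^ k / θ ^ (L^9/2)) := by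
    have h1 := Finset.card_le_card hsub
    have h2 := Finset.card_biUnion_le (s := Finset.univ.powersetCard m)
      (t := fun X => Finset.univ.filter
        (fun ω : Fin k → {e : Finset (Fin n) // e.card = k} =>
          ((Finset.univ.filter (fun i : Fin k => (ω i).1 ∩ X = ∅)).card : ℝ) < L^9/2))
    calc ((Finset.univ.filter (fun ω => ¬ P ω)).card : ℝ)
        ≤ ((∑ X ∈ Finset.univ.powersetCard m, (Finset.univ.filter
            (fun ω : Fin k → {e : Finset (Fin n) // e.card = k} =>
            ((Finset.univ.filter (fun i : Fin k => (ω i).1 ∩ X = ∅)).card : ℝ) < L^9/2)).card : ℕ) : ℝ) := by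
          exact_mod_cast le_trans h1 h2
      _ = ∑ X ∈ Finset.univ.powersetCard m, ((Finset.univ.filter
            (fun ω : Fin k → {e : Finset (Fin n) // e.card = k} =>
            ((Finset.univ.filter (fun i : Fin k => (ω i).1 ∩ X = ∅)).card : ℝ) < L^9/2)).card : ℝ) := by
          push_cast; ring
      _ ≤ ∑ _X ∈ Finset.univ.powersetCard m, (((N:ℝ) - (1-θ) * D) ^ k / θ ^ (L^9/2)) :=
          Finset.sum_le_sum fun X hX => perX X (Finset.mem_powersetCard_univ.1 hX)
      _ = ((Finset.univ.powersetCard m).card : ℝ) * (((N:ℝ) - (1-θ) * D) ^ k / θ ^ (L^9/2)) := by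
          rw [Finset.sum_const, nsmul_eq_mul]
      _ = (n.choose m : ℝ) * (((N:ℝ) - (1-θ) * D) ^ k / θ ^ (L^9/2)) := by
          rw [Finset.card_powersetCard, Finset.card_univ, Fintype.card_fin]
  -- numeric bound on choose n m
  have hlogn0 : 0 ≤ Real.log n := Real.log_nonneg hn1
  have hnum1 : (n.choose m : ℝ) ≤ Real.exp (2*L^3) := by
    have h1 : (n.choose m : ℝ) ≤ (n:ℝ)^m := by exact_mod_cast Nat.choose_le_pow n m
    have hnk2 : (n:ℝ) ≤ (k:ℝ)^2 := by
      have e0 : L*L ≤ k := by rw [← pow_two]; exact hL2k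
      have e1 : 400*L ≤ L*L := mul_le_mul_of_nonneg_right hL400 hL0.le
      have e2 : (k:ℝ)*L ≤ (k:ℝ)*(k/400) :=
        mul_le_mul_of_nonneg_left (by linarith) hk0.le
      have e3 : (k:ℝ)*(k/400) = (k*k)/400 := by ring
      have e4 : (256:ℝ)*k ≤ k*k := by
        have := mul_le_mul_of_nonneg_right hkR hk0.le
        linarith [this]
      have e5 : (k:ℝ)^2 = k*k := by ring
      linarith
    have hlogn : Real.log n ≤ 2*L := by
      have h2 : Real.log n ≤ Real.log ((k:ℝ)^2) := Real.log_le_log hn0 hnk2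
      rw [Real.log_pow] at h2
      rw [← hLdef] at h2
      push_cast at h2
      linarith
    have h3 : Real.exp ((m:ℝ) * Real.log n) = (n:ℝ)^m := by
      rw [Real.exp_nat_mul, Real.exp_log hn0]
    have h4 : (m:ℝ) * Real.log n ≤ L^2 * (2*L) :=
      mul_le_mul hm2 hlogn hlogn0 (by positivity)
    have h5 : L^2*(2*L) = 2*L^3 := by ring
    calc (n.choose m : ℝ) ≤ (n:ℝ)^m := h1
      _ = Real.exp ((m:ℝ) * Real.log n) := h3.symm
      _ ≤ Real.exp (2*L^3) := Real.exp_le_exp.2 (by linarith)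
  -- exponential bound on the main factor
  have hbase0 : (0:ℝ) ≤ (N:ℝ) - (1-θ)*D := by
    have e1 : (1-θ)*(D:ℝ) ≤ (D:ℝ) := mul_le_of_le_one_left hD0 (by linarith)
    linarith
  have hbase : (N:ℝ) - (1-θ)*D ≤ (N:ℝ) * Real.exp (-((1-θ)*((D:ℝ)/N))) := by
    have h1 := Real.add_one_le_exp (-((1-θ)*((D:ℝ)/N)))
    have h2 : (N:ℝ) * (-((1-θ)*((D:ℝ)/N)) + 1) ≤ N * Real.exp (-((1-θ)*((D:ℝ)/N))) :=
      mul_le_mul_of_nonneg_left h1 hNR.le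
    have h3 : (N:ℝ) * (-((1-θ)*((D:ℝ)/N)) + 1) = N - (1-θ)*D := by
      have hNne : (N:ℝ) ≠ 0 := hNR.ne'
      field_simp
      ring
    linarith
  have hpowk : ((N:ℝ) - (1-θ)*D)^k ≤ (N:ℝ)^k * Real.exp (-((k:ℝ)*((1-θ)*((D:ℝ)/N)))) := by
    have e : Real.exp (-((1-θ)*((D:ℝ)/N)))^k = Real.exp (-((k:ℝ)*((1-θ)*((D:ℝ)/N)))) := by
      rw [← Real.exp_nat_mul]; ring_nf
    calc ((N:ℝ) - (1-θ)*D)^k ≤ ((N:ℝ) * Real.exp (-((1-θ)*((D:ℝ)/N))))^k :=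
          pow_le_pow_left₀ hbase0 hbase k
      _ = (N:ℝ)^k * Real.exp (-((1-θ)*((D:ℝ)/N)))^k := mul_pow _ _ k
      _ = (N:ℝ)^k * Real.exp (-((k:ℝ)*((1-θ)*((D:ℝ)/N)))) := by rw [e]
  -- lower bound the exponent
  have hky : L^10/1458 ≤ (k:ℝ)*((1-θ)*((D:ℝ)/N)) := by
    have hexpL : Real.exp (-L) = (k:ℝ)⁻¹ := by
      rw [Real.exp_neg, hLdef, Real.exp_log hk0]
    have hexpLL : Real.exp (10*LL) = L^10 := by
      have h0 : Real.exp (((10:ℕ):ℝ)*LL) = Real.exp LL ^ (10:ℕ) := Real.exp_nat_mul LL 10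
      rw [show ((10:ℕ):ℝ) = (10:ℝ) by norm_num] at h0
      rw [h0, hLLdef, Real.exp_log hL0]
    have hsplitE : Real.exp (-(L - 10*LL + 6)) = Real.exp (-L) * Real.exp (10*LL) * Real.exp (-6) := by
      rw [← Real.exp_add, ← Real.exp_add]; ring_nf
    have hexp6 : (1:ℝ)/729 ≤ Real.exp (-6) := by
      rw [Real.exp_neg]
      have h729 : Real.exp 6 ≤ 729 := by
        have h1 : Real.exp ((6:ℕ):ℝ) = Real.exp 1 ^ (6:ℕ) := by
          rw [← Real.exp_nat_mul]; norm_num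
        have h2 : Real.exp 1 ≤ 3 := by linarith [Real.exp_one_lt_d9]
        have h3 : Real.exp 1 ^ (6:ℕ) ≤ 3^(6:ℕ) := pow_le_pow_left₀ (Real.exp_nonneg 1) h2 6
        have h4 : ((6:ℕ):ℝ) = (6:ℝ) := by norm_num
        rw [h4] at h1
        rw [h1]
        linarith [h3, show ((3:ℝ))^(6:ℕ) = 729 by norm_num]
      have h5 : (729:ℝ)⁻¹ ≤ (Real.exp 6)⁻¹ := inv_anti₀ (Real.exp_pos 6) h729
      rw [show (1:ℝ)/729 = (729:ℝ)⁻¹ by norm_num]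
      exact h5
    have hkexp : (k:ℝ) * Real.exp (-(L - 10*LL + 6)) = L^10 * Real.exp (-6) := by
      rw [hsplitE, hexpL, hexpLL]
      field_simp
    have h6 : L^10 * (1/729) ≤ L^10 * Real.exp (-6) :=
      mul_le_mul_of_nonneg_left hexp6 (by positivity)
    have h7 : (k:ℝ) * Real.exp (-(L - 10*LL + 6)) ≤ (k:ℝ) * ((D:ℝ)/N) :=
      mul_le_mul_of_nonneg_left hqb hk0.le
    have h8 : (0:ℝ) ≤ (k:ℝ)*((D:ℝ)/N) := by positivity
    have h9 : (L^10/729) * (1/2) ≤ ((k:ℝ)*((D:ℝ)/N)) * (1-θ) := by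
      apply mul_le_mul _ (by linarith) (by norm_num) h8
      calc L^10/729 = L^10 * (1/729) := by ring
        _ ≤ L^10 * Real.exp (-6) := h6
        _ = (k:ℝ) * Real.exp (-(L - 10*LL + 6)) := hkexp.symm
        _ ≤ (k:ℝ)*((D:ℝ)/N) := h7
    have h10 : ((k:ℝ)*((D:ℝ)/N)) * (1-θ) = (k:ℝ)*((1-θ)*((D:ℝ)/N)) := by ring
    have h11 : (L^10/729)*(1/2) = L^10/1458 := by ring
    linarith
  -- rpow to exp
  have hrp : θ ^ (L^9/2) = Real.exp (-(LL * (L^9/2))) := by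
    rw [Real.rpow_def_of_pos hθ0]
    have h0 : Real.log θ = -LL := by rw [hθdef, Real.log_inv, hLLdef]
    rw [h0]
    congr 1
    ring
  -- exponent comparison via s = sqrt L
  have hexpo : 2*L^3 + -(L^10/1458) + LL*(L^9/2) ≤ -L := by
    set s := Real.sqrt L with hsdef
    have hs1 : (1:ℝ) ≤ s := by linarith
    have hL3 : L^3 = s^6 := by rw [← hsL]; ring
    have hL9 : L^9 = s^18 := by rw [← hsL]; ring
    have hL10 : L^10 = s^20 := by rw [← hsL]; ring
    have hLs2 : L = s^2 := by rw [← hsL]; ring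
    have h1 : s^19 * 10^4 ≤ s^20 := by
      have h0 : s^20 = s^19 * s := by ring
      rw [h0]
      exact mul_le_mul_of_nonneg_left hs4 (pow_nonneg hs0 19)
    have h2 : s^6 ≤ s^19 := pow_le_pow_right₀ hs1 (by norm_num)
    have h3 : s^2 ≤ s^19 := pow_le_pow_right₀ hs1 (by norm_num)
    have h4 : LL*(L^9/2) ≤ s^19 := by
      rw [hL9]
      have h5 : LL * (s^18/2) ≤ (2*s) * (s^18/2) :=
        mul_le_mul_of_nonneg_right hLLs (by positivity)
      have h6 : (2*s)*(s^18/2) = s^19 := by ring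
      linarith
    linarith [h1, h2, h3, h4, hL3, hL10, hLs2]
  -- combine: full bound on bad count
  have hbad2 : ((Finset.univ.filter (fun ω => ¬ P ω)).card : ℝ) ≤ (N:ℝ)^k * Real.exp (-L) := by
    have hBeq : ((N:ℝ) - (1-θ)*D)^k / θ^(L^9/2)
        = ((N:ℝ) - (1-θ)*D)^k * Real.exp (LL*(L^9/2)) := by
      rw [hrp, Real.exp_neg, div_eq_mul_inv, inv_inv]
    have hA1 : ((N:ℝ) - (1-θ)*D)^k ≤ (N:ℝ)^k * Real.exp (-(L^10/1458)) := by
      calc ((N:ℝ) - (1-θ)*D)^k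
          ≤ (N:ℝ)^k * Real.exp (-((k:ℝ)*((1-θ)*((D:ℝ)/N)))) := hpowk
        _ ≤ (N:ℝ)^k * Real.exp (-(L^10/1458)) :=
            mul_le_mul_of_nonneg_left (Real.exp_le_exp.2 (by linarith)) (by positivity)
    calc ((Finset.univ.filter (fun ω => ¬ P ω)).card : ℝ)
        ≤ (n.choose m : ℝ) * (((N:ℝ) - (1-θ)*D)^k / θ^(L^9/2)) := hbad
      _ = (n.choose m : ℝ) * (((N:ℝ) - (1-θ)*D)^k * Real.exp (LL*(L^9/2))) := by rw [hBeq]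
      _ ≤ Real.exp (2*L^3) * (((N:ℝ)^k * Real.exp (-(L^10/1458))) * Real.exp (LL*(L^9/2))) := by
          apply mul_le_mul hnum1 (mul_le_mul_of_nonneg_right hA1 (Real.exp_nonneg _))
            (by positivity) (Real.exp_nonneg _)
      _ = (N:ℝ)^k * (Real.exp (2*L^3) * Real.exp (-(L^10/1458)) * Real.exp (LL*(L^9/2))) := by
          ring
      _ = (N:ℝ)^k * Real.exp (2*L^3 + -(L^10/1458) + LL*(L^9/2)) := by
          rw [← Real.exp_add, ← Real.exp_add]
      _ ≤ (N:ℝ)^k * Real.exp (-L) :=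
          mul_le_mul_of_nonneg_left (Real.exp_le_exp.2 hexpo) (by positivity)
  -- final assembly
  have hT : Fintype.card (Fin k → {e : Finset (Fin n) // e.card = k}) = N^k := by
    rw [Fintype.card_fun, hEcard, Fintype.card_fin]
  have hTpos : (0:ℝ) < (N:ℝ)^k := by positivity
  have hsplitc : (Finset.univ.filter P).card + (Finset.univ.filter (fun ω => ¬ P ω)).card = N^k := by
    rw [Finset.card_filter_add_card_filter_not, Finset.card_univ, hT]
  have hgc : ((Finset.univ.filter P).card : ℝ)
      = (N:ℝ)^k - ((Finset.univ.filter (fun ω => ¬ P ω)).card : ℝ) := by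
    have hc := congrArg (Nat.cast : ℕ → ℝ) hsplitc
    push_cast at hc
    linarith
  rw [hT]
  have hcast : ((N^k : ℕ):ℝ) = (N:ℝ)^k := by push_cast; ring
  rw [hcast, le_div_iff₀ hTpos]
  have hE : (1 - Real.exp (-L)) * (N:ℝ)^k = (N:ℝ)^k - Real.exp (-L) * (N:ℝ)^k := by ring
  linarith [hgc, hbad2]


/-- let `H'_k` be the random `k`-uniform multi-hypergraph on the vertex set
`[⌈k log k⌉]` (encoded as `Fin ⌈k log k⌉`) whose `k` edges are chosen independently and
uniformly at random from all `k`-element subsets of the vertex set (so an outcome is a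
function `Fin k → {e // e.card = k}` and all outcomes are equally likely).  Then the
probability of the event that for every vertex set `X` of size
`⌊log² k − 10 log k · log log k⌋` at least `log⁹ k / 2` of the edges are disjoint from `X`
tends to `1` as `k → ∞`. -/
theorem stmt_12 :
    Filter.Tendsto
      (fun k : ℕ =>
        (((Finset.univ :
            Finset (Fin k → {e : Finset (Fin ⌈(k : ℝ) * Real.log k⌉₊) // e.card = k})).filter
          (fun ω => ∀ X : Finset (Fin ⌈(k : ℝ) * Real.log k⌉₊),
            X.card = ⌊(Real.log k) ^ 2 - 10 * Real.log k * Real.log (Real.log k)⌋₊ →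
            (Real.log k) ^ 9 / 2 ≤
              ((Finset.univ.filter (fun i : Fin k => (ω i).1 ∩ X = ∅)).card : ℝ))).card : ℝ)
        / (Fintype.card (Fin k → {e : Finset (Fin ⌈(k : ℝ) * Real.log k⌉₊) // e.card = k})))
      Filter.atTop (nhds 1) := by
  have hlog : Filter.Tendsto (fun k : ℕ => Real.log k) Filter.atTop Filter.atTop :=
    Real.tendsto_log_atTop.comp tendsto_natCast_atTop_atTop
  have hexp0 : Filter.Tendsto (fun k : ℕ => Real.exp (-Real.log k)) Filter.atTop (nhds 0) :=
    Real.tendsto_exp_atBot.comp (Filter.tendsto_neg_atTop_atBot.comp hlog)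
  refine tendsto_of_tendsto_of_tendsto_of_le_of_le'
    (g := fun k : ℕ => 1 - Real.exp (-Real.log k)) (h := fun _ : ℕ => (1:ℝ))
    ?_ tendsto_const_nhds ?_ ?_
  · simpa using tendsto_const_nhds.sub hexp0
  · filter_upwards [Filter.eventually_ge_atTop 256, hlog.eventually_ge_atTop (10^8)] with k h1 h2
    exact main_bound k h1 h2
  · refine Filter.Eventually.of_forall fun k => ?_
    apply div_le_one_of_le₀
    · exact_mod_cast le_trans (Finset.card_filter_le _ _) (le_of_eq Finset.card_univ)
    · positivity
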